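/- Let L ≥ 3 and consider the Ising Hamiltonian with field V = S¹_1 + S³_2, i.e., H_V = H^Ising + S¹_1 + S³_2 on ℋ_L. Let ψ_{[1,2]} ∈ ℂ²⊗ℂ² be a ground state of the two-site operator h^Ising_{1,2} + S¹_1 + S³_2 with lowest eigenvalue E, and suppose ψ_{[1,2]} lies in the span of |↑↓⟩ and |↓↓⟩ (i.e., it has spin down at site 2). Then for every k ∈ {0,…,L−2} the vector ψ_{[1,2]} ⊗ |↓⟩^{⊗k} ⊗ |↑⟩^{⊗(L−2−k)} is an eigenvector of H_V with eigenvalue E, the lowest eigenvalue of H_V equals E, and these L−1 vectors are linearly independent; hence the ground-state eigenspace of H_V has dimension at least L−1. -/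

import Mathlib

open Matrix Finset
open scoped ComplexOrder

noncomputable section

/-- Configuration space of a chain of `L` spins-1/2: `ℋ_L = ⊗_{x=1}^L ℂ²`
is identified with functions `Conf L → ℂ`. Value `0` is spin up `|↑⟩`,
value `1` is spin down `|↓⟩`. -/
abbrev Conf (L : ℕ) := Fin L → Fin 2

def S1 : Matrix (Fin 2) (Fin 2) ℂ := !![0, 1/2; 1/2, 0]
def S2 : Matrix (Fin 2) (Fin 2) ℂ := !![0, -Complex.I/2; Complex.I/2, 0]
def S3 : Matrix (Fin 2) (Fin 2) ℂ := !![1/2, 0; 0, -1/2]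

/-- The one-site operator `A` acting on the `x`-th (0-based) tensor factor of `ℋ_L`. -/
def siteOp (L : ℕ) (A : Matrix (Fin 2) (Fin 2) ℂ) (x : ℕ) :
    Matrix (Conf L) (Conf L) ℂ :=
  fun m n =>
    if hx : x < L then
      A (m ⟨x, hx⟩) (n ⟨x, hx⟩) *
        ∏ y ∈ Finset.univ.erase (⟨x, hx⟩ : Fin L), (if m y = n y then 1 else 0)
    else 0

/-- The Ising bond interaction `h^Ising_{x,x+1}` (with `x` 0-based). -/
def hIsing (L : ℕ) (x : ℕ) : Matrix (Conf L) (Conf L) ℂ :=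
  -(siteOp L S3 x * siteOp L S3 (x + 1))
    + ((1 / 2 : ℝ) : ℂ) • (siteOp L S3 x - siteOp L S3 (x + 1))
    + ((1 / 4 : ℝ) : ℂ) • 1

/-- The Ising kink Hamiltonian `H^Ising = ∑_{x=1}^{L-1} h^Ising_{x,x+1}`. -/
def HIsing (L : ℕ) : Matrix (Conf L) (Conf L) ℂ :=
  ∑ x ∈ Finset.range (L - 1), hIsing L x

/-- The set of (real) eigenvalues of a matrix. -/
def eigSet {n : Type*} [Fintype n] [DecidableEq n] (H : Matrix n n ℂ) : Set ℝ :=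
  {μ : ℝ | ∃ ψ : n → ℂ, ψ ≠ 0 ∧ H.mulVec ψ = (μ : ℂ) • ψ}

/-- Euclidean norm of `𝐁(x) ∈ ℝ³`. -/
def bnorm (b : Fin 3 → ℝ) : ℝ := Real.sqrt (b 0 ^ 2 + b 1 ^ 2 + b 2 ^ 2)

/-- The magnetic field term `𝐁(x)·𝐒_x` at (0-based) site `x`. -/
def fieldOp (L : ℕ) (b : Fin 3 → ℝ) (x : ℕ) : Matrix (Conf L) (Conf L) ℂ :=
  (b 0 : ℂ) • siteOp L S1 x + (b 1 : ℂ) • siteOp L S2 x + (b 2 : ℂ) • siteOp L S3 x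

/-- The vector `ψ_{[1,2]} ⊗ |↓⟩^{⊗k} ⊗ |↑⟩^{⊗(L−2−k)}` on the chain of length `L`:
the two-site state `ψ` on sites `1,2` (0-based `0,1`), spin down on the next `k`
sites, spin up on the rest. -/
def embedTwo (L : ℕ) (hL : 2 ≤ L) (ψ : Conf 2 → ℂ) (k : ℕ) : Conf L → ℂ :=
  fun m => ψ (fun i => m (Fin.castLE hL i)) *
    ∏ x : Fin L,
      if 2 ≤ x.1 then
        (if x.1 < 2 + k then (if m x = 1 then 1 else 0) else (if m x = 0 then 1 else 0))
      else 1

/-! ### Auxiliary machinery -/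

namespace IsingAux

/-- Diagonal values of `S3`. -/
def sv (a : Fin 2) : ℂ := if a = 0 then 1/2 else -1/2

/-- Diagonal values of the bond term `h^Ising`. -/
def eps (a b : Fin 2) : ℂ := if a = 0 ∧ b = 1 then 1 else 0

/-- The other spin value. -/
def other (a : Fin 2) : Fin 2 := if a = 0 then 1 else 0

/-- Flip the spin at site `0`. -/
def flip0 {L : ℕ} (m : Conf L) : Conf L := fun x => if x.1 = 0 then other (m x) else m x

lemma other_ne (a : Fin 2) : other a ≠ a := by fin_cases a <;> decide

lemma other_other (a : Fin 2) : other (other a) = a := by fin_cases a <;> decide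

lemma flip0_apply_ne {L : ℕ} (m : Conf L) (x : Fin L) (hx : x.1 ≠ 0) :
    flip0 m x = m x := by simp [flip0, hx]

lemma flip0_ne {L : ℕ} (hL : 0 < L) (m : Conf L) : flip0 m ≠ m := by
  intro h
  have := congrFun h ⟨0, hL⟩
  simp [flip0] at this
  exact other_ne _ this

lemma flip0_flip0 {L : ℕ} (m : Conf L) : flip0 (flip0 m) = m := by
  funext x
  by_cases h : x.1 = 0 <;> simp [flip0, h, other_other]

lemma siteOp_S3_apply {L x : ℕ} (hx : x < L) (m n : Conf L) :
    siteOp L S3 x m n = if n = m then sv (m ⟨x, hx⟩) else 0 := by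
  rw [siteOp, dif_pos hx]
  by_cases h : n = m
  · subst h
    rw [if_pos rfl, Finset.prod_congr rfl (fun y _ => if_pos rfl), Finset.prod_const_one,
      mul_one]
    generalize n ⟨x, hx⟩ = a
    fin_cases a <;> simp [S3, sv]
  · rw [if_neg h]
    by_cases hd : m ⟨x, hx⟩ = n ⟨x, hx⟩
    · have hex : ∃ y, y ≠ (⟨x, hx⟩ : Fin L) ∧ m y ≠ n y := by
        rcases Function.ne_iff.mp (Ne.symm h) with ⟨y, hy⟩
        exact ⟨y, fun hc => hy (hc ▸ hd), hy⟩
      obtain ⟨y, hyx, hy⟩ := hex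
      rw [Finset.prod_eq_zero (Finset.mem_erase.mpr ⟨hyx, Finset.mem_univ y⟩)
        (if_neg hy : (if m y = n y then (1 : ℂ) else 0) = 0), mul_zero]
    · have h0 : S3 (m ⟨x, hx⟩) (n ⟨x, hx⟩) = 0 := by
        revert hd
        generalize m ⟨x, hx⟩ = a; generalize n ⟨x, hx⟩ = b
        fin_cases a <;> fin_cases b <;> simp [S3]
      rw [h0, zero_mul]

lemma siteOp_S3_mulVec {L x : ℕ} (hx : x < L) (f : Conf L → ℂ) (m : Conf L) :
    (siteOp L S3 x).mulVec f m = sv (m ⟨x, hx⟩) * f m := by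
  simp only [Matrix.mulVec, dotProduct]
  rw [Finset.sum_congr rfl (fun n _ => by rw [siteOp_S3_apply hx])]
  simp

lemma siteOp_S1_apply {L : ℕ} (hL : 0 < L) (m n : Conf L) :
    siteOp L S1 0 m n = if n = flip0 m then (1/2 : ℂ) else 0 := by
  rw [siteOp, dif_pos hL]
  have hfl0 : flip0 m ⟨0, hL⟩ = other (m ⟨0, hL⟩) := by simp [flip0]
  by_cases h : n = flip0 m
  · subst h
    rw [if_pos rfl]
    have h1 : S1 (m ⟨0, hL⟩) (flip0 m ⟨0, hL⟩) = 1/2 := by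
      rw [hfl0]
      generalize m ⟨0, hL⟩ = a
      fin_cases a <;> simp [S1, other]
    rw [h1, Finset.prod_congr rfl (fun y hy => ?_), Finset.prod_const_one, mul_one]
    rw [flip0_apply_ne m y (by
      intro h0
      exact (Finset.mem_erase.mp hy).1 (Fin.ext h0))]
    simp
  · rw [if_neg h]
    by_cases hd : n ⟨0, hL⟩ = other (m ⟨0, hL⟩)
    · have hex : ∃ y, y ≠ (⟨0, hL⟩ : Fin L) ∧ m y ≠ n y := by
        rcases Function.ne_iff.mp (fun hc => h hc : n ≠ flip0 m) with ⟨y, hy⟩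
        have hy0 : y ≠ (⟨0, hL⟩ : Fin L) := by
          intro hc; subst hc
          exact hy (by rw [hd, hfl0])
        refine ⟨y, hy0, fun hc => hy ?_⟩
        rw [flip0_apply_ne m y (fun h0 => hy0 (Fin.ext h0))]
        exact hc.symm
      obtain ⟨y, hyx, hy⟩ := hex
      rw [Finset.prod_eq_zero (Finset.mem_erase.mpr ⟨hyx, Finset.mem_univ y⟩)
        (if_neg (fun hc => hy hc : ¬ m y = n y) :
          (if m y = n y then (1 : ℂ) else 0) = 0), mul_zero]
    · have h0 : S1 (m ⟨0, hL⟩) (n ⟨0, hL⟩) = 0 := by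
        revert hd
        generalize m ⟨0, hL⟩ = a; generalize n ⟨0, hL⟩ = b
        fin_cases a <;> fin_cases b <;> simp [S1, other]
      rw [h0, zero_mul]

lemma siteOp_S1_mulVec {L : ℕ} (hL : 0 < L) (f : Conf L → ℂ) (m : Conf L) :
    (siteOp L S1 0).mulVec f m = (1/2 : ℂ) * f (flip0 m) := by
  simp only [Matrix.mulVec, dotProduct]
  rw [Finset.sum_congr rfl (fun n _ => by rw [siteOp_S1_apply hL])]
  simp

lemma sum_mulVec' {n' : Type*} [Fintype n'] {s : Finset ℕ} (M : ℕ → Matrix n' n' ℂ)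
    (v : n' → ℂ) : (∑ x ∈ s, M x) *ᵥ v = ∑ x ∈ s, (M x *ᵥ v) := by
  funext i
  simp only [Matrix.mulVec, dotProduct, Finset.sum_apply, Finset.sum_mul,
    Matrix.sum_apply]
  rw [Finset.sum_comm]

lemma hIsing_mulVec {L x : ℕ} (hx : x + 1 < L) (f : Conf L → ℂ) (m : Conf L) :
    (hIsing L x).mulVec f m
      = eps (m ⟨x, by omega⟩) (m ⟨x + 1, hx⟩) * f m := by
  have hx0 : x < L := by omega
  rw [hIsing]
  rw [Matrix.add_mulVec, Matrix.add_mulVec, Matrix.neg_mulVec,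
    Matrix.smul_mulVec, Matrix.smul_mulVec, Matrix.sub_mulVec,
    ← Matrix.mulVec_mulVec]
  have hfun : siteOp L S3 (x + 1) *ᵥ f = fun m' => sv (m' ⟨x + 1, hx⟩) * f m' :=
    funext fun m' => siteOp_S3_mulVec hx f m'
  simp only [Pi.add_apply, Pi.neg_apply, Pi.smul_apply, Pi.sub_apply,
    Matrix.one_mulVec, smul_eq_mul, hfun]
  rw [siteOp_S3_mulVec hx0 (fun m' => sv (m' ⟨x + 1, hx⟩) * f m') m,
    siteOp_S3_mulVec hx0 f m]
  generalize m ⟨x, hx0⟩ = a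
  generalize m ⟨x + 1, hx⟩ = b
  fin_cases a <;> fin_cases b <;> simp [sv, eps] <;> push_cast <;> ring

/-- `ε`-coefficient at bond `x`, defined for all `x`. -/
def epsAt (L : ℕ) (m : Conf L) (x : ℕ) : ℂ :=
  if h : x + 1 < L then eps (m ⟨x, by omega⟩) (m ⟨x + 1, h⟩) else 0

lemma HIsing_mulVec {L : ℕ} (f : Conf L → ℂ) (m : Conf L) :
    (HIsing L).mulVec f m = (∑ x ∈ Finset.range (L - 1), epsAt L m x) * f m := by
  rw [HIsing, sum_mulVec', Finset.sum_apply, Finset.sum_mul]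
  refine Finset.sum_congr rfl (fun x hx => ?_)
  have hx1 : x + 1 < L := by
    have := Finset.mem_range.mp hx; omega
  rw [hIsing_mulVec hx1, epsAt, dif_pos hx1]

/-- Action of the full Hamiltonian `H_V = H^Ising + S¹_1 + S³_2`. -/
lemma HV_mulVec {L : ℕ} (hL : 2 ≤ L) (f : Conf L → ℂ) (m : Conf L) :
    (HIsing L + siteOp L S1 0 + siteOp L S3 1).mulVec f m
      = (∑ x ∈ Finset.range (L - 1), epsAt L m x) * f m
        + sv (m ⟨1, by omega⟩) * f m + (1/2 : ℂ) * f (flip0 m) := by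
  rw [Matrix.add_mulVec, Matrix.add_mulVec]
  simp only [Pi.add_apply]
  rw [HIsing_mulVec, siteOp_S1_mulVec (by omega), siteOp_S3_mulVec (show 1 < L by omega)]
  ring

/-- The tail pattern: sites `2,…,2+k-1` down, sites `2+k,…,L-1` up. -/
def Pat (L k : ℕ) (m : Conf L) : Prop :=
  ∀ x : Fin L, 2 ≤ x.1 → m x = (if x.1 < 2 + k then 1 else 0)

lemma embedTwo_of_pat {L k : ℕ} (hL : 2 ≤ L) (ψ : Conf 2 → ℂ) {m : Conf L}
    (h : Pat L k m) :
    embedTwo L hL ψ k m = ψ (fun i => m (Fin.castLE hL i)) := by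
  rw [embedTwo, Finset.prod_congr rfl (fun x _ => ?_), Finset.prod_const_one, mul_one]
  by_cases h2 : 2 ≤ x.1
  · rw [if_pos h2, h x h2]
    by_cases hk : x.1 < 2 + k
    · rw [if_pos hk, if_pos hk, if_pos rfl]
    · rw [if_neg hk, if_neg hk, if_pos rfl]
  · rw [if_neg h2]

lemma embedTwo_of_not_pat {L k : ℕ} (hL : 2 ≤ L) (ψ : Conf 2 → ℂ) {m : Conf L}
    (h : ¬ Pat L k m) :
    embedTwo L hL ψ k m = 0 := by
  rw [embedTwo]
  rw [Pat] at h; push_neg at h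
  obtain ⟨x, hx2, hxne⟩ := h
  rw [Finset.prod_eq_zero (Finset.mem_univ x) ?_, mul_zero]
  rw [if_pos hx2]
  by_cases hk : x.1 < 2 + k
  · rw [if_pos hk, if_neg (by rw [if_pos hk] at hxne; exact hxne)]
  · rw [if_neg hk, if_neg (by rw [if_neg hk] at hxne; exact hxne)]

lemma pat_flip0_iff {L k : ℕ} (m : Conf L) : Pat L k (flip0 m) ↔ Pat L k m := by
  have key : ∀ x : Fin L, 2 ≤ x.1 → flip0 m x = m x :=
    fun x hx => flip0_apply_ne m x (by omega)
  constructor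
  · intro h x hx; rw [← key x hx]; exact h x hx
  · intro h x hx; rw [key x hx]; exact h x hx

lemma castLE_one {L : ℕ} (hL : 2 ≤ L) : (Fin.castLE hL (1 : Fin 2)) = ⟨1, by omega⟩ := by
  apply Fin.ext; simp

lemma castLE_zero {L : ℕ} (hL : 2 ≤ L) : (Fin.castLE hL (0 : Fin 2)) = ⟨0, by omega⟩ := by
  apply Fin.ext; simp

lemma flip0_castLE {L : ℕ} (hL : 2 ≤ L) (m : Conf L) :
    (fun i : Fin 2 => flip0 m (Fin.castLE hL i)) = flip0 (fun i => m (Fin.castLE hL i)) := by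
  funext i
  simp only [flip0, Fin.coe_castLE]

/-- The pointwise two-site eigenvalue relation. -/
lemma twoSite_rel (ψ : Conf 2 → ℂ) (E : ℝ)
    (heig : (hIsing 2 0 + siteOp 2 S1 0 + siteOp 2 S3 1).mulVec ψ = (E : ℂ) • ψ)
    (w : Conf 2) :
    eps (w 0) (w 1) * ψ w + sv (w 1) * ψ w + (1/2 : ℂ) * ψ (flip0 w) = (E : ℂ) * ψ w := by
  have h2 : hIsing 2 0 + siteOp 2 S1 0 + siteOp 2 S3 1
      = HIsing 2 + siteOp 2 S1 0 + siteOp 2 S3 1 := by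
    rw [HIsing]; norm_num
  rw [h2] at heig
  have hw := congrFun heig w
  rw [HV_mulVec (le_refl 2)] at hw
  have h00 : (⟨0, by omega⟩ : Fin 2) = 0 := rfl
  have h11 : (⟨1, by omega⟩ : Fin 2) = 1 := rfl
  rw [show (2 : ℕ) - 1 = 1 from rfl, Finset.sum_range_one, epsAt, dif_pos (by omega),
    h00, h11] at hw
  rw [hw, Pi.smul_apply, smul_eq_mul]

set_option maxHeartbeats 1000000 in
/-- The embedded vectors are eigenvectors. -/
lemma eig_embed {L : ℕ} (hL : 3 ≤ L) (ψ : Conf 2 → ℂ) (E : ℝ)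
    (heig : (hIsing 2 0 + siteOp 2 S1 0 + siteOp 2 S3 1).mulVec ψ = (E : ℂ) • ψ)
    (hdown : ∀ m : Conf 2, m 1 = 0 → ψ m = 0)
    (hL2 : 2 ≤ L) (k : ℕ) (hk : k ≤ L - 2) :
    (HIsing L + siteOp L S1 0 + siteOp L S3 1).mulVec
        (embedTwo L hL2 ψ k) = (E : ℂ) • embedTwo L hL2 ψ k := by
  funext m
  rw [HV_mulVec hL2, Pi.smul_apply, smul_eq_mul]
  by_cases hpat : Pat L k m
  · have hpf : Pat L k (flip0 m) := (pat_flip0_iff m).mpr hpat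
    rw [embedTwo_of_pat hL2 ψ hpat, embedTwo_of_pat hL2 ψ hpf, flip0_castLE]
    set w := fun i : Fin 2 => m (Fin.castLE hL2 i) with hw
    have hm0 : m ⟨0, by omega⟩ = w 0 := (congrArg m (castLE_zero hL2)).symm
    have hm1 : m ⟨1, by omega⟩ = w 1 := (congrArg m (castLE_one hL2)).symm
    by_cases h1 : w 1 = 0
    · have hf1 : flip0 w 1 = 0 := by
        rw [flip0_apply_ne w 1 (by norm_num)]; exact h1
      rw [hdown w h1, hdown (flip0 w) hf1]
      simp
    · have h1' : w 1 = 1 := by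
        have hlt : (w 1).1 < 2 := (w 1).isLt
        have hne : (w 1).1 ≠ 0 := fun hc => h1 (Fin.ext hc)
        exact Fin.ext (by omega)
    -- the bond sum collapses to the single term at `x = 0`
      have hterm0 : epsAt L m 0 = eps (w 0) (w 1) := by
        rw [epsAt, dif_pos (by omega : 0 + 1 < L)]
        rw [show (⟨0 + 1, by omega⟩ : Fin L) = ⟨1, by omega⟩ from rfl, hm0, hm1]
      have hothers : ∀ x ∈ Finset.range (L - 1), x ≠ 0 → epsAt L m x = 0 := by
        intro x hxmem hx0
        have hxr := Finset.mem_range.mp hxmem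
        have hx1L : x + 1 < L := by omega
        rw [epsAt, dif_pos hx1L]
        have hcontra : ¬ (m ⟨x, by omega⟩ = 0 ∧ m ⟨x + 1, hx1L⟩ = 1) := by
          rintro ⟨ha, hb⟩
          by_cases hx1 : x = 1
          · subst hx1
            rw [hm1, h1'] at ha
            exact absurd ha (by norm_num)
          · have hx2 : 2 ≤ x := by omega
            have hxk : ¬ (x < 2 + k) := by
              intro hlt
              have h5 := hpat ⟨x, by omega⟩ hx2
              rw [ha] at h5
              rw [if_pos (show (⟨x, by omega⟩ : Fin L).1 < 2 + k from hlt)] at h5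
              exact absurd h5 (by norm_num)
            have h6 := hpat ⟨x + 1, hx1L⟩ (show 2 ≤ x + 1 by omega)
            rw [hb] at h6
            rw [if_neg (show ¬ ((⟨x + 1, hx1L⟩ : Fin L).1 < 2 + k) from by
              simp only [Fin.val_mk]; omega)] at h6
            exact absurd h6 (by norm_num)
        simp only [eps]
        rw [if_neg hcontra]
      have hsum : (∑ x ∈ Finset.range (L - 1), epsAt L m x) = eps (w 0) (w 1) := by
        rw [Finset.sum_eq_single_of_mem 0 (Finset.mem_range.mpr (by omega)) hothers,
          hterm0]
      rw [hsum, hm1]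
      exact twoSite_rel ψ E heig w
  · have hpf : ¬ Pat L k (flip0 m) := fun h => hpat ((pat_flip0_iff m).mp h)
    rw [embedTwo_of_not_pat hL2 ψ hpat, embedTwo_of_not_pat hL2 ψ hpf]
    simp

/-- A configuration realizing the pattern `k` above a given two-site configuration. -/
def patConf (L : ℕ) (w : Conf 2) (k : ℕ) : Conf L :=
  fun x => if h2 : x.1 < 2 then w ⟨x.1, h2⟩ else (if x.1 < 2 + k then 1 else 0)

lemma pat_patConf {L : ℕ} (w : Conf 2) (k : ℕ) : Pat L k (patConf L w k) := by
  intro x hx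
  rw [patConf, dif_neg (by omega)]

lemma patConf_castLE {L : ℕ} (hL : 2 ≤ L) (w : Conf 2) (k : ℕ) :
    (fun i : Fin 2 => patConf L w k (Fin.castLE hL i)) = w := by
  funext i
  rw [patConf]
  simp only [Fin.coe_castLE]
  rw [dif_pos i.isLt]

lemma embedTwo_patConf {L : ℕ} (hL : 2 ≤ L) (ψ : Conf 2 → ℂ) (w : Conf 2) (k : ℕ) :
    embedTwo L hL ψ k (patConf L w k) = ψ w := by
  rw [embedTwo_of_pat hL ψ (pat_patConf w k), patConf_castLE hL]


/-! ### The two-site operator: entries, hermiticity, positivity -/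

/-- The two-site operator `h^Ising_{1,2} + S¹_1 + S³_2`. -/
def H2 : Matrix (Conf 2) (Conf 2) ℂ := hIsing 2 0 + siteOp 2 S1 0 + siteOp 2 S3 1

lemma H2_eq : H2 = HIsing 2 + siteOp 2 S1 0 + siteOp 2 S3 1 := by
  rw [H2, HIsing]; norm_num

lemma H2_mulVec (f : Conf 2 → ℂ) (w : Conf 2) :
    H2.mulVec f w = (eps (w 0) (w 1) + sv (w 1)) * f w + (1/2 : ℂ) * f (flip0 w) := by
  rw [H2_eq, HV_mulVec (le_refl 2)]
  have h00 : (⟨0, by omega⟩ : Fin 2) = 0 := rfl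
  have h11 : (⟨1, by omega⟩ : Fin 2) = 1 := rfl
  rw [show (2 : ℕ) - 1 = 1 from rfl, Finset.sum_range_one, epsAt, dif_pos (by omega),
    h00, h11]
  ring

lemma H2_apply (m n : Conf 2) :
    H2 m n = (eps (m 0) (m 1) + sv (m 1)) * (if m = n then 1 else 0)
      + (1/2 : ℂ) * (if flip0 m = n then 1 else 0) := by
  have h2 := congrFun (Matrix.mulVec_single H2 n (1 : ℂ)) m
  rw [H2_mulVec] at h2
  rw [Pi.smul_apply, Matrix.col_apply, op_smul_eq_mul] at h2
  rw [← mul_one (H2 m n), ← h2]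
  simp [Pi.single_apply]

lemma star_eps (a b : Fin 2) : star (eps a b) = eps a b := by
  rw [eps]; split <;> simp

lemma star_sv (a : Fin 2) : star (sv a) = sv a := by
  fin_cases a <;> simp [sv] <;> norm_num [Complex.ext_iff]

lemma H2_isHermitian : H2.IsHermitian := by
  apply Matrix.ext
  intro m n
  rw [Matrix.conjTranspose_apply, H2_apply n m, H2_apply m n]
  rw [star_add, star_mul', star_mul', star_add, star_eps, star_sv]
  have hhalf : star (1/2 : ℂ) = 1/2 := by norm_num [Complex.ext_iff]
  rw [hhalf]
  have hif1 : star (if n = m then (1 : ℂ) else 0) = (if n = m then (1 : ℂ) else 0) := by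
    split <;> simp
  have hif2 : star (if flip0 n = m then (1 : ℂ) else 0)
      = (if flip0 n = m then (1 : ℂ) else 0) := by
    split <;> simp
  rw [hif1, hif2]
  have hcond : (flip0 n = m) = (flip0 m = n) :=
    propext ⟨fun h => by rw [← h, flip0_flip0], fun h => by rw [← h, flip0_flip0]⟩
  simp only [hcond]
  by_cases h : m = n
  · subst h; rfl
  · rw [if_neg (fun hc => h hc.symm), if_neg h]
    ring

lemma H2_sub_posSemidef (E : ℝ) (hleast : IsLeast (eigSet H2) E) :
    (H2 - (E : ℂ) • 1).PosSemidef := by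
  have hsub : (H2 - (E : ℂ) • 1).IsHermitian := by
    apply H2_isHermitian.sub
    unfold Matrix.IsHermitian
    rw [Matrix.conjTranspose_smul, Matrix.conjTranspose_one]
    congr 1
    exact Complex.conj_ofReal E
  apply hsub.posSemidef_iff_eigenvalues_nonneg.mpr
  intro i
  set ν := hsub.eigenvalues i with hν
  have hv := hsub.mulVec_eigenvectorBasis i
  set v : Conf 2 → ℂ := ⇑(hsub.eigenvectorBasis i) with hvdef
  have hv0 : v ≠ 0 := by
    have h := hsub.eigenvectorBasis.orthonormal.ne_zero i
    intro hc
    apply h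
    ext x
    exact congrFun hc x
  have hVec : H2 *ᵥ v = (((ν + E : ℝ)) : ℂ) • v := by
    have hexp : (H2 - (E : ℂ) • 1) *ᵥ v = H2 *ᵥ v - (E : ℂ) • v := by
      rw [Matrix.sub_mulVec, Matrix.smul_mulVec, Matrix.one_mulVec]
    rw [hexp] at hv
    have hsm : ν • v = ((ν : ℂ)) • v := by
      funext x
      simp [Complex.real_smul]
    rw [hsm] at hv
    have := sub_eq_iff_eq_add.mp hv
    rw [this]
    funext x
    simp only [Pi.add_apply, Pi.smul_apply, smul_eq_mul]
    push_cast
    ring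
  have hmem : (ν + E) ∈ eigSet H2 := ⟨v, hv0, hVec⟩
  have := hleast.2 hmem
  change (0 : ℝ) ≤ ν
  linarith

lemma H2_quad (E : ℝ) (hleast : IsLeast (eigSet H2) E) (g : Conf 2 → ℂ) :
    (E : ℂ) * (star g ⬝ᵥ g) ≤ star g ⬝ᵥ (H2 *ᵥ g) := by
  have h := (H2_sub_posSemidef E hleast).dotProduct_mulVec_nonneg g
  rw [Matrix.sub_mulVec, Matrix.smul_mulVec, Matrix.one_mulVec,
    dotProduct_sub, dotProduct_smul, smul_eq_mul] at h
  exact sub_nonneg.mp h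


/-! ### Splitting the chain into the first two sites and the tail -/

/-- Glue a two-site configuration and a tail configuration. -/
def glue (L : ℕ) (hL : 2 ≤ L) (w : Conf 2) (t : Fin (L - 2) → Fin 2) : Conf L :=
  fun x => if h : x.1 < 2 then w ⟨x.1, h⟩ else t ⟨x.1 - 2, by omega⟩

/-- The splitting equivalence. -/
def glueEquiv (L : ℕ) (hL : 2 ≤ L) : (Conf 2 × (Fin (L - 2) → Fin 2)) ≃ Conf L where
  toFun p := glue L hL p.1 p.2
  invFun m := (fun i => m (Fin.castLE hL i), fun j => m ⟨j.1 + 2, by omega⟩)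
  left_inv p := by
    obtain ⟨w, t⟩ := p
    refine Prod.ext ?_ ?_
    · funext i
      show glue L hL w t (Fin.castLE hL i) = w i
      rw [glue]
      simp only [Fin.coe_castLE]
      rw [dif_pos i.isLt]
    · funext j
      show glue L hL w t ⟨j.1 + 2, by omega⟩ = t j
      rw [glue]
      simp only
      rw [dif_neg (by omega)]
      exact congrArg t (Fin.ext (by simp))
  right_inv m := by
    funext x
    show glue L hL _ _ x = m x
    rw [glue]
    simp only
    by_cases h : x.1 < 2
    · rw [dif_pos h]
      exact congrArg m (Fin.ext rfl)
    · rw [dif_neg h]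
      exact congrArg m (Fin.ext (by simp; omega))

lemma glue_zero {L : ℕ} (hL : 2 ≤ L) (w : Conf 2) (t : Fin (L - 2) → Fin 2) :
    glue L hL w t ⟨0, by omega⟩ = w 0 := by
  rw [glue]; simp only
  rw [dif_pos (by norm_num : ((⟨0, by omega⟩ : Fin L)).1 < 2)]
  exact congrArg w (Fin.ext rfl)

lemma glue_one {L : ℕ} (hL : 2 ≤ L) (w : Conf 2) (t : Fin (L - 2) → Fin 2) :
    glue L hL w t ⟨1, by omega⟩ = w 1 := by
  rw [glue]; simp only
  rw [dif_pos (by norm_num : ((⟨1, by omega⟩ : Fin L)).1 < 2)]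
  exact congrArg w (Fin.ext rfl)

lemma flip0_glue {L : ℕ} (hL : 2 ≤ L) (w : Conf 2) (t : Fin (L - 2) → Fin 2) :
    flip0 (glue L hL w t) = glue L hL (flip0 w) t := by
  funext x
  rw [flip0, glue, glue]
  by_cases h0 : x.1 = 0
  · have h2 : x.1 < 2 := by omega
    rw [if_pos h0, dif_pos h2, dif_pos h2, flip0]
    rw [if_pos h0]
  · rw [if_neg h0]
    by_cases h2 : x.1 < 2
    · rw [dif_pos h2, dif_pos h2, flip0]
      rw [if_neg h0]
    · rw [dif_neg h2, dif_neg h2]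

lemma epsAt_nonneg {L : ℕ} (m : Conf L) (x : ℕ) : 0 ≤ epsAt L m x := by
  rw [epsAt]
  split
  · rw [eps]; split <;> norm_num
  · exact le_refl 0

/-- The chain quadratic form bound. -/
lemma chain_quad {L : ℕ} (hL : 3 ≤ L) (E : ℝ) (hleast : IsLeast (eigSet H2) E)
    (f : Conf L → ℂ) :
    (E : ℂ) * (star f ⬝ᵥ f) ≤ star f ⬝ᵥ ((HIsing L + siteOp L S1 0 + siteOp L S3 1) *ᵥ f) := by
  have hL2 : 2 ≤ L := by omega
  set e := glueEquiv L hL2 with he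
  -- reorganize `star f ⬝ᵥ f`
  have hN : star f ⬝ᵥ f
      = ∑ t : Fin (L - 2) → Fin 2, ∑ w : Conf 2,
          star (f (glue L hL2 w t)) * f (glue L hL2 w t) := by
    rw [dotProduct]
    rw [← Equiv.sum_comp e (fun m => star f m * f m), Fintype.sum_prod_type]
    rw [Finset.sum_comm]
    rfl
  -- expand the quadratic form
  have hQ : star f ⬝ᵥ ((HIsing L + siteOp L S1 0 + siteOp L S3 1) *ᵥ f)
      = (∑ m : Conf L, (∑ x ∈ Finset.Ico 1 (L - 1), epsAt L m x) * (star (f m) * f m))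
        + ∑ t : Fin (L - 2) → Fin 2, star (fun w => f (glue L hL2 w t))
            ⬝ᵥ (H2 *ᵥ (fun w => f (glue L hL2 w t))) := by
    rw [dotProduct]
    have hsplit : ∀ m : Conf L, star f m * ((HIsing L + siteOp L S1 0 + siteOp L S3 1) *ᵥ f) m
        = (∑ x ∈ Finset.Ico 1 (L - 1), epsAt L m x) * (star (f m) * f m)
          + star (f m) * ((epsAt L m 0 + sv (m ⟨1, by omega⟩)) * f m
            + (1/2 : ℂ) * f (flip0 m)) := by
      intro m
      rw [HV_mulVec hL2]
      rw [Finset.range_eq_Ico]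
      rw [Finset.sum_eq_sum_Ico_succ_bot (by omega : 0 < L - 1)]
      simp only [Pi.star_apply]
      ring
    rw [Finset.sum_congr rfl (fun m _ => hsplit m), Finset.sum_add_distrib]
    congr 1
    -- reorganize the two-site part over the glue equivalence
    rw [← Equiv.sum_comp e
      (fun m => star (f m) * ((epsAt L m 0 + sv (m ⟨1, by omega⟩)) * f m
        + (1/2 : ℂ) * f (flip0 m))), Fintype.sum_prod_type, Finset.sum_comm]
    refine Finset.sum_congr rfl (fun t _ => ?_)
    rw [dotProduct]
    refine Finset.sum_congr rfl (fun w _ => ?_)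
    have hglue : e (w, t) = glue L hL2 w t := rfl
    rw [hglue]
    rw [H2_mulVec]
    have h0 : epsAt L (glue L hL2 w t) 0 = eps (w 0) (w 1) := by
      rw [epsAt, dif_pos (by omega : 0 + 1 < L)]
      rw [show (⟨0 + 1, by omega⟩ : Fin L) = ⟨1, by omega⟩ from rfl]
      rw [glue_zero hL2, glue_one hL2]
    have h1 : sv ((glue L hL2 w t) ⟨1, by omega⟩) = sv (w 1) := by
      rw [glue_one hL2]
    rw [h0, h1, flip0_glue hL2]
    rfl
  rw [hQ, hN]
  have hA : 0 ≤ ∑ m : Conf L, (∑ x ∈ Finset.Ico 1 (L - 1), epsAt L m x)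
      * (star (f m) * f m) := by
    refine Finset.sum_nonneg (fun m _ => mul_nonneg ?_ (star_mul_self_nonneg _))
    exact Finset.sum_nonneg (fun x _ => epsAt_nonneg m x)
  have hB : ∀ t : Fin (L - 2) → Fin 2,
      (E : ℂ) * (∑ w : Conf 2, star (f (glue L hL2 w t)) * f (glue L hL2 w t))
        ≤ star (fun w => f (glue L hL2 w t)) ⬝ᵥ (H2 *ᵥ (fun w => f (glue L hL2 w t))) := by
    intro t
    have := H2_quad E hleast (fun w => f (glue L hL2 w t))
    rw [dotProduct] at this
    simpa using this
  calc (E : ℂ) * ∑ t : Fin (L - 2) → Fin 2, ∑ w : Conf 2,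
        star (f (glue L hL2 w t)) * f (glue L hL2 w t)
      = ∑ t : Fin (L - 2) → Fin 2, (E : ℂ) * ∑ w : Conf 2,
          star (f (glue L hL2 w t)) * f (glue L hL2 w t) := by rw [Finset.mul_sum]
    _ ≤ ∑ t : Fin (L - 2) → Fin 2, star (fun w => f (glue L hL2 w t))
          ⬝ᵥ (H2 *ᵥ (fun w => f (glue L hL2 w t))) := Finset.sum_le_sum (fun t _ => hB t)
    _ ≤ _ := le_add_of_nonneg_left hA


lemma not_pat_patConf {L k j : ℕ} (hL : 2 ≤ L) (hk : k ≤ L - 2) (hj : j ≤ L - 2)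
    (hne : k ≠ j) (w : Conf 2) : ¬ Pat L k (patConf L w j) := by
  intro hp
  rcases Nat.lt_or_ge j k with hlt | hge
  · have hs : 2 + j < L := by omega
    have h := hp ⟨2 + j, hs⟩ (show 2 ≤ 2 + j by omega)
    rw [patConf] at h
    rw [dif_neg (show ¬ (2 + j < 2) by omega)] at h
    rw [if_neg (show ¬ (2 + j < 2 + j) by omega),
      if_pos (show 2 + j < 2 + k by omega)] at h
    exact absurd h (by decide)
  · have hlt : k < j := by omega
    have hs : 2 + k < L := by omega
    have h := hp ⟨2 + k, hs⟩ (show 2 ≤ 2 + k by omega)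
    rw [patConf] at h
    rw [dif_neg (show ¬ (2 + k < 2) by omega)] at h
    rw [if_pos (show 2 + k < 2 + j by omega),
      if_neg (show ¬ (2 + k < 2 + k) by omega)] at h
    exact absurd h (by decide)


end IsingAux

/-- for the Ising Hamiltonian with field `V = S¹_1 + S³_2`, every vector
`ψ_{[1,2]} ⊗ |↓⟩^{⊗k} ⊗ |↑⟩^{⊗(L−2−k)}`, `k = 0,…,L−2`, built from a two-site ground
state `ψ_{[1,2]}` with spin down at site 2, is an eigenvector of `H_V` with the
two-site ground state energy `E`; `E` is the lowest eigenvalue of `H_V`, and these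
`L−1` vectors are linearly independent, so the ground-state eigenspace has dimension
at least `L−1`. -/
theorem ising_degenerate_ground_states
    (L : ℕ) (hL : 3 ≤ L)
    (ψ : Conf 2 → ℂ) (E : ℝ)
    (hψ0 : ψ ≠ 0)
    (heig : (hIsing 2 0 + siteOp 2 S1 0 + siteOp 2 S3 1).mulVec ψ = (E : ℂ) • ψ)
    (hleast : IsLeast (eigSet (hIsing 2 0 + siteOp 2 S1 0 + siteOp 2 S3 1)) E)
    (hdown : ∀ m : Conf 2, m 1 = 0 → ψ m = 0) :
    (∀ k : ℕ, k ≤ L - 2 →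
      (HIsing L + siteOp L S1 0 + siteOp L S3 1).mulVec
          (embedTwo L (by omega) ψ k) = (E : ℂ) • embedTwo L (by omega) ψ k) ∧
    IsLeast (eigSet (HIsing L + siteOp L S1 0 + siteOp L S3 1)) E ∧
    LinearIndependent ℂ (fun k : Fin (L - 1) => embedTwo L (by omega) ψ k.1) ∧
    L - 1 ≤ Module.finrank ℂ
      (Module.End.eigenspace
        (Matrix.mulVecLin (HIsing L + siteOp L S1 0 + siteOp L S3 1)) ((E : ℝ) : ℂ)) := by
  classical
  have hL2 : 2 ≤ L := by omega
  obtain ⟨w₀, hw₀'⟩ := Function.ne_iff.mp hψ0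
  have hw₀ : ψ w₀ ≠ 0 := by simpa using hw₀'
  have hleast' : IsLeast (eigSet IsingAux.H2) E := hleast
  have heigk : ∀ k : ℕ, k ≤ L - 2 →
      (HIsing L + siteOp L S1 0 + siteOp L S3 1).mulVec (embedTwo L hL2 ψ k)
        = (E : ℂ) • embedTwo L hL2 ψ k :=
    fun k hk => IsingAux.eig_embed hL ψ E heig hdown hL2 k hk
  -- linear independence
  have hli : LinearIndependent ℂ (fun k : Fin (L - 1) => embedTwo L hL2 ψ k.1) := by
    rw [Fintype.linearIndependent_iff]
    intro c hc j
    have heval := congrFun hc (IsingAux.patConf L w₀ j.1)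
    rw [Finset.sum_apply] at heval
    have hterm : ∀ k : Fin (L - 1),
        (c k • embedTwo L hL2 ψ k.1) (IsingAux.patConf L w₀ j.1)
          = if k = j then c j * ψ w₀ else 0 := by
      intro k
      rw [Pi.smul_apply, smul_eq_mul]
      by_cases hkj : k = j
      · subst hkj
        rw [if_pos rfl, IsingAux.embedTwo_patConf hL2]
      · rw [if_neg hkj,
          IsingAux.embedTwo_of_not_pat hL2 ψ
            (IsingAux.not_pat_patConf hL2 (by have := k.isLt; omega)
              (by have := j.isLt; omega) (fun h => hkj (Fin.ext h)) w₀), mul_zero]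
    rw [Finset.sum_congr rfl (fun k _ => hterm k)] at heval
    simp only [Finset.sum_ite_eq', Finset.mem_univ, if_true] at heval
    exact (mul_eq_zero.mp heval).resolve_right hw₀
  -- nonvanishing of the embedded vectors
  have hnz : ∀ k : ℕ, embedTwo L hL2 ψ k ≠ 0 := by
    intro k hc
    have := congrFun hc (IsingAux.patConf L w₀ k)
    rw [IsingAux.embedTwo_patConf hL2] at this
    exact hw₀ this
  refine ⟨fun k _hk => heigk k _hk, ⟨⟨embedTwo L hL2 ψ 0, hnz 0, heigk 0 (by omega)⟩, ?_⟩,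
    hli, ?_⟩
  · -- lower bound
    rintro μ ⟨f, hf0, hfe⟩
    have hquad := IsingAux.chain_quad hL E hleast' f
    have hlhs : star f ⬝ᵥ ((HIsing L + siteOp L S1 0 + siteOp L S3 1) *ᵥ f)
        = (μ : ℂ) * (star f ⬝ᵥ f) := by
      rw [hfe, dotProduct_smul, smul_eq_mul]
    have hNr : star f ⬝ᵥ f = ((∑ m : Conf L, Complex.normSq (f m) : ℝ) : ℂ) := by
      rw [dotProduct]
      push_cast
      refine Finset.sum_congr rfl (fun m _ => ?_)
      rw [Pi.star_apply, Complex.star_def, ← Complex.normSq_eq_conj_mul_self]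
    set r : ℝ := ∑ m : Conf L, Complex.normSq (f m) with hrdef
    have hrpos : 0 < r := by
      obtain ⟨m₀, hm₀⟩ := Function.ne_iff.mp hf0
      refine Finset.sum_pos' (fun m _ => Complex.normSq_nonneg _)
        ⟨m₀, Finset.mem_univ _, Complex.normSq_pos.mpr (by simpa using hm₀)⟩
    rw [hlhs, hNr] at hquad
    have hquad' : ((E * r : ℝ) : ℂ) ≤ ((μ * r : ℝ) : ℂ) := by push_cast; exact hquad
    have := Complex.real_le_real.mp hquad'
    exact le_of_mul_le_mul_right this hrpos
  · -- finrank bound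
    have hmem : ∀ k : Fin (L - 1),
        embedTwo L hL2 ψ k.1 ∈ Module.End.eigenspace
          (Matrix.mulVecLin (HIsing L + siteOp L S1 0 + siteOp L S3 1)) ((E : ℝ) : ℂ) :=
      fun k => Module.End.mem_eigenspace_iff.mpr
        (by rw [Matrix.mulVecLin_apply]; exact heigk k.1 (by have := k.isLt; omega))
    set V := Module.End.eigenspace
      (Matrix.mulVecLin (HIsing L + siteOp L S1 0 + siteOp L S3 1)) ((E : ℝ) : ℂ) with hV
    have hli2 : LinearIndependent ℂ
        (fun k : Fin (L - 1) => (⟨embedTwo L hL2 ψ k.1, hmem k⟩ : V)) :=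
      LinearIndependent.of_comp V.subtype hli
    have := hli2.fintype_card_le_finrank
    simpa using this
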